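/- The common zero locus in ℂ² of the ideal J = (f_0, f_1), where f_0 = Σ_{j=0}^{⌊(k+1)/2⌋} (−1)^j ((k+1)!/((k+1−2j)!(j!)²)) y^{k+1−2j} z^j and f_1 = ((k+2)y² − 2kz)∂f_0/∂y + (3k+4)yz ∂f_0/∂z (k ≥ 5), is exactly {(0,0)}. -/

import Mathlib

open MvPolynomial

/-- The operator `D = ((k+2)y² − 2kz) ∂/∂y + (3k+4) yz ∂/∂z` on `ℂ[y,z]`. -/
noncomputable def D2 (k : ℂ) : MvPolynomial (Fin 2) ℂ → MvPolynomial (Fin 2) ℂ :=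
  fun p => (C (k + 2) * X 0 ^ 2 - C (2 * k) * X 1) * pderiv 0 p
    + C (3 * k + 4) * X 0 * X 1 * pderiv 1 p

/-- `f₀(y,z) = Σⱼ (−1)ʲ (k+1)!/((k+1−2j)!(j!)²) y^{k+1−2j} zʲ`. -/
noncomputable def f0 (k : ℕ) : MvPolynomial (Fin 2) ℂ :=
  ∑ j ∈ Finset.range ((k + 1) / 2 + 1),
    C ((-1) ^ j * (Nat.factorial (k + 1) : ℂ) /
      (Nat.factorial (k + 1 - 2 * j) * (Nat.factorial j) ^ 2)) *
    X 0 ^ (k + 1 - 2 * j) * X 1 ^ j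


noncomputable def cc (k j : ℕ) : ℂ :=
  (-1) ^ j * (Nat.factorial (k + 1) : ℂ) /
    (Nat.factorial (k + 1 - 2 * j) * (Nat.factorial j) ^ 2)

noncomputable def PP (k : ℕ) : Polynomial ℂ :=
  ∑ j ∈ Finset.range ((k + 1) / 2 + 1), Polynomial.C (cc k j) * Polynomial.X ^ j

lemma fact_cast_ne (n : ℕ) : ((Nat.factorial n : ℂ)) ≠ 0 :=
  Nat.cast_ne_zero.mpr (Nat.factorial_ne_zero _)

lemma cc_ne_zero (k j : ℕ) : cc k j ≠ 0 := by
  unfold cc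
  apply div_ne_zero
  · exact mul_ne_zero (pow_ne_zero _ (by norm_num)) (fact_cast_ne _)
  · exact mul_ne_zero (fact_cast_ne _) (pow_ne_zero _ (fact_cast_ne _))

lemma PP_coeff (k n : ℕ) :
    (PP k).coeff n = if n < (k + 1) / 2 + 1 then cc k n else 0 := by
  unfold PP
  rw [Polynomial.finset_sum_coeff]
  simp only [Polynomial.coeff_C_mul, Polynomial.coeff_X_pow]
  by_cases h : n < (k + 1) / 2 + 1
  · rw [if_pos h, Finset.sum_eq_single n]
    · simp
    · intro b _ hb; simp [Ne.symm hb]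
    · intro hn; exact absurd (Finset.mem_range.mpr h) hn
  · rw [if_neg h]
    apply Finset.sum_eq_zero
    intro b hb
    have : b ≠ n := by
      rintro rfl; exact h (Finset.mem_range.mp hb)
    simp [Ne.symm this]

lemma PP_rec (k j : ℕ) :
    ((j:ℂ)+1)^2 * (PP k).coeff (j+1)
      + ((k:ℂ)+1-2*j) * ((k:ℂ)-2*j) * (PP k).coeff j = 0 := by
  rw [PP_coeff, PP_coeff]
  rcases lt_trichotomy j ((k+1)/2) with hj | hj | hj
  · rw [if_pos (by omega), if_pos (by omega)]
    obtain ⟨b, rfl⟩ : ∃ b, k = 2*j + b + 1 := ⟨k - 2*j - 1, by omega⟩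
    unfold cc
    have h1 : 2*j + b + 1 + 1 - 2*(j+1) = b := by omega
    have h2 : 2*j + b + 1 + 1 - 2*j = b + 2 := by omega
    rw [h1, h2, Nat.factorial_succ j,
      show (b+2).factorial = (b+2)*((b+1)*b.factorial) by
        rw [Nat.factorial_succ, Nat.factorial_succ]]
    push_cast
    have hb : ((b.factorial : ℂ)) ≠ 0 := fact_cast_ne _
    have hj' : ((j.factorial : ℂ)) ≠ 0 := fact_cast_ne _
    have hb1 : ((b:ℂ)+1) ≠ 0 := Nat.cast_add_one_ne_zero b
    have hb2 : ((b:ℂ)+2) ≠ 0 := by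
      have h2 : (((b+2:ℕ)):ℂ) ≠ 0 := Nat.cast_ne_zero.mpr (by omega)
      push_cast at h2; exact h2
    have hj1 : ((j:ℂ)+1) ≠ 0 := Nat.cast_add_one_ne_zero j
    field_simp
    ring
  · subst hj
    rw [if_neg (by omega), if_pos (by omega)]
    obtain h | h : 2*((k+1)/2) = k ∨ 2*((k+1)/2) = k+1 := by omega
    · have hc : ((k:ℂ) - 2*((k+1)/2 : ℕ)) = 0 := by
        have := congrArg (Nat.cast : ℕ → ℂ) h; push_cast at this; linear_combination -this
      rw [hc]; ring
    · have hc : ((k:ℂ) + 1 - 2*((k+1)/2 : ℕ)) = 0 := by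
        have := congrArg (Nat.cast : ℕ → ℂ) h; push_cast at this; linear_combination -this
      rw [hc]; ring
  · rw [if_neg (by omega), if_neg (by omega)]; ring

open Polynomial in

open Polynomial in


lemma PP_ode (k : ℕ) :
    Polynomial.X * (1 + Polynomial.C (4:ℂ) * Polynomial.X) * ((PP k).derivative.derivative)
      + (1 + Polynomial.C (2 - 4*(k:ℂ)) * Polynomial.X) * (PP k).derivative
      + Polynomial.C ((k:ℂ)*((k:ℂ)+1)) * (PP k) = 0 := by
  have main : Polynomial.X * ((PP k).derivative.derivative)
      + Polynomial.C (4:ℂ) * (Polynomial.X * (Polynomial.X * ((PP k).derivative.derivative)))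
      + (PP k).derivative + Polynomial.C (2 - 4*(k:ℂ)) * (Polynomial.X * (PP k).derivative)
      + Polynomial.C ((k:ℂ)*((k:ℂ)+1)) * (PP k) = 0 := by
    ext n
    match n with
    | 0 =>
      simp only [Polynomial.coeff_add, Polynomial.coeff_X_mul_zero, Polynomial.coeff_C_mul, Polynomial.coeff_derivative,
        Polynomial.mul_coeff_zero, Polynomial.coeff_X_zero, Polynomial.coeff_zero, Polynomial.coeff_C_zero, Polynomial.coeff_one]
      have h := PP_rec k 0
      push_cast at h ⊢
      linear_combination h
    | (n+1) =>
      simp only [Polynomial.coeff_add, Polynomial.coeff_C_mul, Polynomial.coeff_X_mul, Polynomial.coeff_derivative, Polynomial.coeff_zero,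
        Polynomial.coeff_one, Polynomial.coeff_C, Nat.succ_ne_zero, if_false, add_eq_zero, and_false,
        one_ne_zero]
      match n with
      | 0 =>
        simp only [Polynomial.coeff_X_mul_zero, Polynomial.coeff_derivative, Polynomial.coeff_zero]
        have h := PP_rec k 1
        push_cast at h ⊢
        linear_combination h
      | (m+1) =>
        simp only [Polynomial.coeff_X_mul, Polynomial.coeff_derivative, Polynomial.coeff_zero]
        have h := PP_rec k (m+2)
        push_cast at h ⊢
        linear_combination h
  linear_combination main

lemma ode_no_double_root (p : Polynomial ℂ) (a : ℂ)
    (hode : Polynomial.X * (1 + Polynomial.C (4:ℂ) * Polynomial.X) * p.derivative.derivative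
      + (1 + Polynomial.C (2 - 4*a) * Polynomial.X) * p.derivative + Polynomial.C (a*(a+1)) * p = 0)
    (u : ℂ) (hu0 : u ≠ 0) (hu4 : 1 + 4*u ≠ 0)
    (hp : p.eval u = 0) (hp' : p.derivative.eval u = 0) : p = 0 := by
  have H : ∀ n : ℕ, (Polynomial.X - Polynomial.C u)^(n+2) ∣ p := by
    intro n
    induction n with
    | zero =>
      obtain ⟨q, hq⟩ := Polynomial.dvd_iff_isRoot.mpr hp
      have hd : p.derivative = q + (Polynomial.X - Polynomial.C u) * q.derivative := by
        rw [hq]; simp [Polynomial.derivative_mul]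
      have hqu : q.eval u = 0 := by
        have h2 := hp'; rw [hd] at h2; simpa using h2
      obtain ⟨r, hr⟩ := Polynomial.dvd_iff_isRoot.mpr hqu
      exact ⟨r, by rw [hq, hr]; ring⟩
    | succ n ih =>
      obtain ⟨q, hq⟩ := ih
      have hd1 : p.derivative
          = (Polynomial.X - Polynomial.C u)^(n+1) * (Polynomial.C ((n:ℂ)+2) * q + (Polynomial.X - Polynomial.C u) * q.derivative) := by
        rw [hq]
        simp only [Polynomial.derivative_mul, Polynomial.derivative_pow, Polynomial.derivative_X, Polynomial.derivative_C,
          Polynomial.derivative_sub, Polynomial.derivative_one, Polynomial.derivative_natCast, Polynomial.derivative_ofNat, map_add, map_mul, map_one, map_natCast, map_ofNat, Nat.add_sub_cancel]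
        push_cast
        ring
      have hd2 : p.derivative.derivative = (Polynomial.X - Polynomial.C u)^n *
          (Polynomial.C (((n:ℂ)+2)*((n:ℂ)+1)) * q + Polynomial.C (2*((n:ℂ)+2)) * ((Polynomial.X - Polynomial.C u) * q.derivative)
            + (Polynomial.X - Polynomial.C u)^2 * q.derivative.derivative) := by
        rw [hd1]
        simp only [Polynomial.derivative_mul, Polynomial.derivative_pow, Polynomial.derivative_X, Polynomial.derivative_C,
          Polynomial.derivative_sub, Polynomial.derivative_add, Polynomial.derivative_one, Polynomial.derivative_natCast,
          Polynomial.derivative_ofNat, map_add, map_mul, map_one, map_natCast, map_ofNat,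
          Nat.add_sub_cancel]
        push_cast
        ring
      have e : (Polynomial.X - Polynomial.C u)^n * (Polynomial.X * (1 + Polynomial.C (4:ℂ) * Polynomial.X) *
            (Polynomial.C (((n:ℂ)+2)*((n:ℂ)+1)) * q + Polynomial.C (2*((n:ℂ)+2)) * ((Polynomial.X - Polynomial.C u) * q.derivative)
              + (Polynomial.X - Polynomial.C u)^2 * q.derivative.derivative))
          = (Polynomial.X - Polynomial.C u)^n * ((Polynomial.X - Polynomial.C u) *
            (-((1 + Polynomial.C (2 - 4*a) * Polynomial.X) * (Polynomial.C ((n:ℂ)+2) * q + (Polynomial.X - Polynomial.C u) * q.derivative)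
              + Polynomial.C (a*(a+1)) * ((Polynomial.X - Polynomial.C u) * q)))) := by
        have h3 := hode
        rw [hd2, hd1, hq] at h3
        linear_combination h3
      have hc := mul_left_cancel₀ (pow_ne_zero n (Polynomial.X_sub_C_ne_zero u)) e
      have h5 : u * (1 + 4*u) * ((((n:ℂ)+2)*((n:ℂ)+1)) * q.eval u) = 0 := by
        have he := congrArg (Polynomial.eval u) hc
        simp only [Polynomial.eval_mul, Polynomial.eval_add, Polynomial.eval_sub, Polynomial.eval_X, Polynomial.eval_C, Polynomial.eval_one, Polynomial.eval_pow,
          Polynomial.eval_neg] at he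
        linear_combination he
      have hnn : (((n:ℂ)+2)*((n:ℂ)+1)) ≠ 0 := by
        have h1 : ((n:ℂ)+2) ≠ 0 := by
          have h2 : (((n+2:ℕ)):ℂ) ≠ 0 := Nat.cast_ne_zero.mpr (by omega)
          push_cast at h2; exact h2
        exact mul_ne_zero h1 (Nat.cast_add_one_ne_zero n)
      have hqu : q.eval u = 0 := by
        rcases mul_eq_zero.mp h5 with h | h
        · rcases mul_eq_zero.mp h with h | h
          · exact absurd h hu0
          · exact absurd h hu4
        · rcases mul_eq_zero.mp h with h | h
          · exact absurd h hnn
          · exact h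
      obtain ⟨r, hr⟩ := Polynomial.dvd_iff_isRoot.mpr hqu
      exact ⟨r, by rw [hq, hr]; ring⟩
  by_contra hp0
  have hle := Polynomial.natDegree_le_of_dvd (H p.natDegree) hp0
  rw [Polynomial.natDegree_pow, Polynomial.natDegree_X_sub_C] at hle
  omega

lemma f0_eq (k : ℕ) : f0 k = ∑ j ∈ Finset.range ((k + 1) / 2 + 1),
    C (cc k j) * X 0 ^ (k + 1 - 2 * j) * X 1 ^ j := rfl

lemma eval_f0 (k : ℕ) (y z : ℂ) :
    eval (![y, z] : Fin 2 → ℂ) (f0 k)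
      = ∑ j ∈ Finset.range ((k + 1) / 2 + 1), cc k j * y ^ (k + 1 - 2 * j) * z ^ j := by
  rw [f0_eq, map_sum]
  refine Finset.sum_congr rfl fun j hj => ?_
  simp

lemma pderiv0_f0 (k : ℕ) : pderiv 0 (f0 k) = ∑ j ∈ Finset.range ((k + 1) / 2 + 1),
    C (cc k j) * (((k + 1 - 2 * j : ℕ) : MvPolynomial (Fin 2) ℂ)
      * X 0 ^ (k - 2 * j)) * X 1 ^ j := by
  rw [f0_eq, map_sum]
  refine Finset.sum_congr rfl fun j hj => ?_
  have h1 : (1 : Fin 2) ≠ 0 := by decide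
  have he : k + 1 - 2 * j - 1 = k - 2 * j := by omega
  rw [pderiv_mul, pderiv_mul, pderiv_C, pderiv_pow, pderiv_pow, pderiv_X_self,
    pderiv_X_of_ne h1, he]
  ring

lemma pderiv1_f0 (k : ℕ) : pderiv 1 (f0 k) = ∑ j ∈ Finset.range ((k + 1) / 2 + 1),
    C (cc k j) * X 0 ^ (k + 1 - 2 * j)
      * (((j : ℕ) : MvPolynomial (Fin 2) ℂ) * X 1 ^ (j - 1)) := by
  rw [f0_eq, map_sum]
  refine Finset.sum_congr rfl fun j hj => ?_
  have h1 : (0 : Fin 2) ≠ 1 := by decide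
  rw [pderiv_mul, pderiv_mul, pderiv_C, pderiv_pow, pderiv_pow, pderiv_X_self,
    pderiv_X_of_ne h1]
  ring

lemma eval_D2f0 (k : ℕ) (y z : ℂ) :
    eval (![y, z] : Fin 2 → ℂ) (D2 (k : ℂ) (f0 k))
      = (((k:ℂ) + 2) * y ^ 2 - 2 * k * z) *
          (∑ j ∈ Finset.range ((k + 1) / 2 + 1),
            cc k j * ((k + 1 - 2 * j : ℕ) : ℂ) * y ^ (k - 2 * j) * z ^ j)
        + (3 * (k:ℂ) + 4) * y * z *
          (∑ j ∈ Finset.range ((k + 1) / 2 + 1),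
            cc k j * ((j : ℕ) : ℂ) * y ^ (k + 1 - 2 * j) * z ^ (j - 1)) := by
  unfold D2
  rw [pderiv0_f0, pderiv1_f0]
  simp only [map_add, map_mul, map_sub, map_sum, map_pow, map_natCast, eval_C, eval_X,
    Matrix.cons_val_zero, Matrix.cons_val_one, Matrix.head_cons]
  simp only [Finset.mul_sum]
  congr 1
  · exact Finset.sum_congr rfl fun j hj => by ring
  · exact Finset.sum_congr rfl fun j hj => by ring

lemma evalPP (k : ℕ) (u : ℂ) :
    (PP k).eval u = ∑ j ∈ Finset.range ((k + 1) / 2 + 1), cc k j * u ^ j := by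
  unfold PP
  rw [Polynomial.eval_finset_sum]
  exact Finset.sum_congr rfl fun j hj => by simp


lemma evalPP' (k : ℕ) (u : ℂ) :
    (PP k).derivative.eval u
      = ∑ j ∈ Finset.range ((k + 1) / 2 + 1), cc k j * (j : ℂ) * u ^ (j - 1) := by
  unfold PP
  rw [Polynomial.derivative_sum, Polynomial.eval_finset_sum]
  refine Finset.sum_congr rfl fun j hj => ?_
  rw [Polynomial.derivative_C_mul, Polynomial.derivative_X_pow]
  simp
  ring

lemma PP_eval_zero (k : ℕ) : (PP k).eval 0 = cc k 0 := by
  rw [evalPP, Finset.sum_eq_single_of_mem 0 (by simp)]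
  · simp
  · intro j hj hne
    rw [zero_pow hne]; ring

lemma PP_eval_negq (k : ℕ) : (PP k).eval (-(1/4)) ≠ 0 := by
  have key : (PP k).eval (-(1/4)) = ((∑ j ∈ Finset.range ((k + 1) / 2 + 1),
      ((Nat.factorial (k+1) : ℝ) /
        (Nat.factorial (k + 1 - 2*j) * (Nat.factorial j)^2 * 4^j)) : ℝ) : ℂ) := by
    rw [evalPP]
    push_cast
    refine Finset.sum_congr rfl fun j hj => ?_
    unfold cc
    have h4 : ((-1:ℂ))^j * (-(1/4):ℂ)^j = (1/4)^j := by
      rw [← mul_pow]; norm_num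
    have hd1 : ((Nat.factorial (k+1-2*j) : ℂ)) ≠ 0 := fact_cast_ne _
    have hd2 : ((Nat.factorial j : ℂ)) ≠ 0 := fact_cast_ne _
    have h44 : ((4:ℂ))^j ≠ 0 := pow_ne_zero _ (by norm_num)
    field_simp
    have hsq : ((-1:ℂ))^j * (-1)^j = 1 := by rw [← mul_pow]; norm_num
    have h5 : ((-1/4:ℂ))^j * 4^j = (-1)^j := by rw [← mul_pow]; norm_num
    linear_combination ((Nat.factorial (k+1) : ℂ) * (-1)^j) * h5 + ((Nat.factorial (k+1) : ℂ)) * hsq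
  rw [key]
  rw [Complex.ofReal_ne_zero]
  have : 0 < (∑ j ∈ Finset.range ((k + 1) / 2 + 1),
      ((Nat.factorial (k+1) : ℝ) /
        (Nat.factorial (k + 1 - 2*j) * (Nat.factorial j)^2 * 4^j))) := by
    apply Finset.sum_pos
    · intro j hj
      have h1 : (0:ℝ) < Nat.factorial (k+1) := by positivity
      have h2 : (0:ℝ) < Nat.factorial (k+1-2*j) := by
        exact_mod_cast Nat.factorial_pos _
      have h3 : (0:ℝ) < Nat.factorial j := by exact_mod_cast Nat.factorial_pos _
      positivity
    · exact ⟨0, by simp⟩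
  exact ne_of_gt this

theorem stmt_15 (k : ℕ) (hk : 5 ≤ k) (y z : ℂ) :
    (eval (![y, z] : Fin 2 → ℂ) (f0 k) = 0 ∧
      eval (![y, z] : Fin 2 → ℂ) (D2 (k : ℂ) (f0 k)) = 0) ↔ (y = 0 ∧ z = 0) := by
  have hkC : ((k:ℂ)) ≠ 0 := Nat.cast_ne_zero.mpr (by omega)
  constructor
  · rintro ⟨h0, h1⟩
    rw [eval_f0] at h0
    rw [eval_D2f0] at h1
    by_cases hy : y = 0
    · subst hy
      refine ⟨rfl, ?_⟩
      rcases Nat.even_or_odd k with ⟨t, ht⟩ | ⟨t, ht⟩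
      · -- k even, k = t + t : use h1
        have hS1 : (∑ j ∈ Finset.range ((k + 1) / 2 + 1),
            cc k j * ((k + 1 - 2 * j : ℕ) : ℂ) * (0:ℂ) ^ (k - 2 * j) * z ^ j)
            = cc k t * z ^ t := by
          rw [Finset.sum_eq_single_of_mem t (by simp only [Finset.mem_range]; omega)]
          · have e1 : k - 2*t = 0 := by omega
            have e2 : k + 1 - 2*t = 1 := by omega
            rw [e1, e2]; norm_num
          · intro j hj hne
            simp only [Finset.mem_range] at hj
            rw [zero_pow (show k - 2*j ≠ 0 by omega)]; ring
        rw [hS1] at h1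
        have h2 : (-(2*(k:ℂ))) * cc k t * z ^ (t+1) = 0 := by linear_combination h1
        have h3 := mul_eq_zero.mp h2
        rcases h3 with h3 | h3
        · rcases mul_eq_zero.mp h3 with h4 | h4
          · exact absurd h4 (by simpa using hkC)
          · exact absurd h4 (cc_ne_zero k t)
        · exact pow_eq_zero_iff (by omega) |>.mp h3
      · -- k odd, k = 2t + 1 : use h0
        have hS0 : (∑ j ∈ Finset.range ((k + 1) / 2 + 1),
            cc k j * (0:ℂ) ^ (k + 1 - 2 * j) * z ^ j) = cc k (t+1) * z ^ (t+1) := by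
          rw [Finset.sum_eq_single_of_mem (t+1) (by simp only [Finset.mem_range]; omega)]
          · have e1 : k + 1 - 2*(t+1) = 0 := by omega
            rw [e1]; norm_num
          · intro j hj hne
            simp only [Finset.mem_range] at hj
            rw [zero_pow (show k + 1 - 2*j ≠ 0 by omega)]; ring
        rw [hS0] at h0
        rcases mul_eq_zero.mp h0 with h3 | h3
        · exact absurd h3 (cc_ne_zero k (t+1))
        · exact pow_eq_zero_iff (by omega) |>.mp h3
    · exfalso
      set u : ℂ := z / y^2 with hu
      have hz : z = u * y^2 := by rw [hu]; field_simp
      -- convert h0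
      have e0 : (∑ j ∈ Finset.range ((k + 1) / 2 + 1), cc k j * y ^ (k + 1 - 2 * j) * z ^ j)
          = y ^ (k+1) * (PP k).eval u := by
        rw [evalPP, Finset.mul_sum]
        refine Finset.sum_congr rfl fun j hj => ?_
        simp only [Finset.mem_range] at hj
        have hj2 : 2*j ≤ k + 1 := by omega
        have hy2 : (y:ℂ) ^ (k+1) = y ^ (k+1-2*j) * y ^ (2*j) := by
          rw [← pow_add]; congr 1; omega
        rw [hz, mul_pow, hy2, ← pow_mul]
        ring
      have hPu : (PP k).eval u = 0 := by
        rw [e0] at h0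
        exact (mul_eq_zero.mp h0).resolve_left (pow_ne_zero _ hy)
      -- convert h1
      have e1 : (((k:ℂ) + 2) * y ^ 2 - 2 * k * z) *
          (∑ j ∈ Finset.range ((k + 1) / 2 + 1),
            cc k j * ((k + 1 - 2 * j : ℕ) : ℂ) * y ^ (k - 2 * j) * z ^ j)
        + (3 * (k:ℂ) + 4) * y * z *
          (∑ j ∈ Finset.range ((k + 1) / 2 + 1),
            cc k j * ((j : ℕ) : ℂ) * y ^ (k + 1 - 2 * j) * z ^ (j - 1))
          = y ^ (k+2) * (((k:ℂ)+1) * (((k:ℂ)+2) - 2*k*u) * (PP k).eval u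
              + (k:ℂ) * u * (1 + 4*u) * (PP k).derivative.eval u) := by
        rw [evalPP, evalPP']
        simp only [Finset.mul_sum, mul_add, Finset.sum_add_distrib.symm]
        refine Finset.sum_congr rfl fun j hj => ?_
        simp only [Finset.mem_range] at hj
        rcases Nat.eq_zero_or_pos j with rfl | hjp
        · simp only [Nat.mul_zero, Nat.sub_zero, pow_zero, Nat.cast_zero, Nat.cast_add,
            Nat.cast_one, mul_one]
          rw [hz]
          push_cast
          ring
        · obtain ⟨j', rfl⟩ : ∃ j', j = j' + 1 := ⟨j - 1, by omega⟩
          rcases (show 2*(j'+1) ≤ k ∨ k = 2*j' + 1 by omega) with h2 | h2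
          · obtain ⟨d, rfl⟩ : ∃ d, k = 2*(j'+1) + d := ⟨k - 2*(j'+1), by omega⟩
            have e1 : 2*(j'+1) + d + 1 - 2*(j'+1) = d + 1 := by omega
            have e2 : 2*(j'+1) + d - 2*(j'+1) = d := by omega
            have e3 : j' + 1 - 1 = j' := by omega
            rw [e1, e2, e3, hz]
            push_cast
            ring
          · subst h2
            have e1 : 2*j' + 1 + 1 - 2*(j'+1) = 0 := by omega
            have e2 : 2*j' + 1 - 2*(j'+1) = 0 := by omega
            have e3 : j' + 1 - 1 = j' := by omega
            rw [e1, e2, e3, hz]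
            push_cast
            ring
      rw [e1] at h1
      have hB : ((k:ℂ)+1) * (((k:ℂ)+2) - 2*k*u) * (PP k).eval u
          + (k:ℂ) * u * (1 + 4*u) * (PP k).derivative.eval u = 0 :=
        (mul_eq_zero.mp h1).resolve_left (pow_ne_zero _ hy)
      have hC : (k:ℂ) * u * (1 + 4*u) * (PP k).derivative.eval u = 0 := by
        linear_combination hB - (((k:ℂ)+1) * (((k:ℂ)+2) - 2*(k:ℂ)*u)) * hPu
      by_cases hu0 : u = 0
      · rw [hu0, PP_eval_zero] at hPu
        exact cc_ne_zero k 0 hPu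
      by_cases hu4 : 1 + 4*u = 0
      · have : u = -(1/4) := by linear_combination (1/4 : ℂ) * hu4
        rw [this] at hPu
        exact PP_eval_negq k hPu
      have hder : (PP k).derivative.eval u = 0 := by
        rcases mul_eq_zero.mp hC with h | h
        · rcases mul_eq_zero.mp h with h | h
          · rcases mul_eq_zero.mp h with h | h
            · exact absurd h hkC
            · exact absurd h hu0
          · exact absurd h hu4
        · exact h
      have hzero := ode_no_double_root (PP k) (k:ℂ) (PP_ode k) u hu0 hu4 hPu hder
      have : (PP k).eval 0 = 0 := by rw [hzero]; simp
      rw [PP_eval_zero] at this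
      exact cc_ne_zero k 0 this
  · rintro ⟨rfl, rfl⟩
    constructor
    · rw [eval_f0]
      apply Finset.sum_eq_zero
      intro j hj
      rcases Nat.eq_zero_or_pos j with rfl | hjp
      · rw [zero_pow (show k + 1 - 2*0 ≠ 0 by omega)]; ring
      · rw [zero_pow (show j ≠ 0 by omega)]; ring
    · rw [eval_D2f0]
      ring
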